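/- Write a = H'(2T/3 − η) and b = H'(T/3 + η). Using the T-periodicity of H, the eigenvalues of the Jacobian J3(2T/3 − η, 2T/3 − η) are λ1 = −a − b and λ2 = −b. If a + b > 0 and a < 0, then b > 0 and both eigenvalues are negative, so (2T/3 − η, 2T/3 − η) is a sink, independent of the choice of α. -/

import Mathlib

open Matrix Polynomial

/-- the eigenvalues of `J3(2T/3 − η, 2T/3 − η)` are `−a − b` and `−b`;
if `a + b > 0` and `a < 0` then `b > 0` and both eigenvalues are negative,
so the point is a sink, independent of `α`. -/
theorem stmt_9 (T : ℝ) (hT : 0 < T) (H H' : ℝ → ℝ)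
    (hH' : ∀ x : ℝ, HasDerivAt H (H' x) x)
    (hper : ∀ θ : ℝ, H (θ + T) = H θ)
    (η : ℝ) (hη : η ∈ Set.Icc (0 : ℝ) (T / 6))
    (α : ℝ) (hα0 : 0 < α) (hα1 : α < 1)
    (J3 : ℝ → ℝ → Matrix (Fin 2) (Fin 2) ℝ)
    (hJ3 : ∀ θ1 θ2 : ℝ, J3 θ1 θ2 =
      -!![H' (-θ1) + α * H' θ1, (1 - α) * H' θ2;
          α * H' θ1, H' (-θ2) + (1 - α) * H' θ2])
    (a b : ℝ) (ha : a = H' (2 * T / 3 - η)) (hb : b = H' (T / 3 + η)) :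
    (J3 (2 * T / 3 - η) (2 * T / 3 - η)).charpoly =
      (Polynomial.X - Polynomial.C (-a - b)) * (Polynomial.X - Polynomial.C (-b)) ∧
    (0 < a + b → a < 0 → (0 < b ∧ -a - b < 0 ∧ -b < 0)) := by
  -- H' is T-periodic
  have hper' : ∀ x : ℝ, H' (x + T) = H' x := by
    intro x
    have h1 : HasDerivAt H (H' (x + T)) (x + T) := hH' (x + T)
    have h2 : HasDerivAt (fun y => H (y + T)) (H' (x + T)) x := by
      have := h1.comp x ((hasDerivAt_id x).add_const T)
      simpa [Function.comp_def] using this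
    have h3 : HasDerivAt H (H' (x + T)) x := by
      have : (fun y => H (y + T)) = H := funext hper
      rwa [this] at h2
    exact (h3.unique (hH' x))
  have hneg : H' (-(2 * T / 3 - η)) = b := by
    have := hper' (-(2 * T / 3 - η))
    have harg : -(2 * T / 3 - η) + T = T / 3 + η := by ring
    rw [harg] at this
    rw [← this, hb]
  have hpos : H' (2 * T / 3 - η) = a := ha.symm
  constructor
  · rw [hJ3, Matrix.charpoly, Matrix.det_fin_two]
    rw [Matrix.charmatrix_apply_eq, Matrix.charmatrix_apply_eq,
      Matrix.charmatrix_apply_ne _ _ _ (by decide : (0:Fin 2) ≠ 1),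
      Matrix.charmatrix_apply_ne _ _ _ (by decide : (1:Fin 2) ≠ 0)]
    simp only [hneg, hpos, Matrix.neg_apply, Matrix.cons_val', Matrix.cons_val_zero,
      Matrix.cons_val_one, Matrix.head_cons, Matrix.empty_val',
      Matrix.cons_val_fin_one, Matrix.head_fin_const, Matrix.of_apply]
    ring_nf
    simp only [map_neg, map_add, _root_.map_mul, map_sub, _root_.map_one]
    ring
  · intro hab hane
    have hb0 : 0 < b := by linarith
    exact ⟨hb0, by linarith, by linarith⟩
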